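/- arXiv:2512.14349 — 3 statements merged into one kernel-verified Lean document; each statement's English description precedes it below -/
import Mathlib

section
/- If q̇ = ν + v is the decomposition of a velocity with ν ∈ Ker(J) and v ∈ Ker(J)^⊥ (M-orthogonal complement), and η = J q̇ is the task velocity, then the task-space kinetic energy is (1/2) vᵀ M v = (1/2) ηᵀ Λ η, where Λ = (J M⁻¹ Jᵀ)⁻¹. Equivalently, (J_M^#)ᵀ M J_M^# = Λ. -/
open Matrix

/-- The orthogonal complement of a subspace `S ⊆ ℝⁿ` with respect to the inner
product induced by a matrix `M`, i.e. `{v | vᵀ M s = 0 for all s ∈ S}`. -/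
def mOrthComplement {n : ℕ} (M : Matrix (Fin n) (Fin n) ℝ)
    (S : Submodule ℝ (Fin n → ℝ)) : Submodule ℝ (Fin n → ℝ) where
  carrier := {v | ∀ s ∈ S, v ⬝ᵥ M.mulVec s = 0}
  add_mem' := by
    intro a b ha hb s hs
    simp [add_dotProduct, ha s hs, hb s hs]
  zero_mem' := by
    intro s hs
    simp
  smul_mem' := by
    intro c a ha s hs
    simp [smul_dotProduct, ha s hs]

/-- The dynamically consistent pseudoinverse `J_M^# = M⁻¹ Jᵀ (J M⁻¹ Jᵀ)⁻¹`. -/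
noncomputable def dynConsistentPseudoinverse {n m : ℕ}
    (M : Matrix (Fin n) (Fin n) ℝ) (J : Matrix (Fin m) (Fin n) ℝ) :
    Matrix (Fin n) (Fin m) ℝ :=
  M⁻¹ * Jᵀ * (J * M⁻¹ * Jᵀ)⁻¹

/-- With `q̇ = ν + v`, `ν ∈ Ker J`, `v ∈ (Ker J)ᗮ` and
`η = J q̇`, the task-space kinetic energy satisfies
`(1/2) vᵀ M v = (1/2) ηᵀ Λ η` with `Λ = (J M⁻¹ Jᵀ)⁻¹`; equivalently
`(J_M^#)ᵀ M J_M^# = Λ`. -/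
theorem task_space_kinetic_energy
    {n m : ℕ} (hmn : m ≤ n)
    (M : Matrix (Fin n) (Fin n) ℝ) (J : Matrix (Fin m) (Fin n) ℝ)
    (hM : M.PosDef) (hJ : J.rank = m)
    (qdot ν v : Fin n → ℝ) (η : Fin m → ℝ)
    (hν : ν ∈ LinearMap.ker J.mulVecLin)
    (hv : v ∈ mOrthComplement M (LinearMap.ker J.mulVecLin))
    (hsum : qdot = ν + v)
    (hη : η = J.mulVec qdot) :
    (1 / 2 : ℝ) * (v ⬝ᵥ M.mulVec v) =
      (1 / 2 : ℝ) * (η ⬝ᵥ (J * M⁻¹ * Jᵀ)⁻¹.mulVec η) ∧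
    (dynConsistentPseudoinverse M J)ᵀ * M * dynConsistentPseudoinverse M J =
      (J * M⁻¹ * Jᵀ)⁻¹ := by
  -- injectivity of Jᵀ *ᵥ ·
  have hinj : Function.Injective (Jᵀ.mulVecLin) := by
    rw [← LinearMap.ker_eq_bot]
    have h1 : Jᵀ.rank = m := by rw [Matrix.rank_transpose]; exact hJ
    have h2 := LinearMap.finrank_range_add_finrank_ker (Jᵀ.mulVecLin)
    rw [Matrix.rank] at h1
    simp [h1, Module.finrank_pi] at h2
    simpa using h2
  have hMinv : M⁻¹.PosDef := hM.inv
  have hMT : Mᵀ = M := by exact (by simpa using hM.isHermitian : M.IsSymm).eq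
  have hMinvT : (M⁻¹)ᵀ = M⁻¹ := by exact (by simpa using hM.isHermitian.inv : M⁻¹.IsSymm).eq
  -- A := J * M⁻¹ * Jᵀ is positive definite
  set A := J * M⁻¹ * Jᵀ with hAdef
  have hA : A.PosDef := by
    refine PosDef.of_dotProduct_mulVec_pos ?_ ?_
    · have := (hMinv.posSemidef.mul_mul_conjTranspose_same J).isHermitian
      simpa using this
    · intro x hx
      have hy : Jᵀ *ᵥ x ≠ 0 := by
        intro h
        exact hx (hinj (by simpa [Matrix.mulVec_transpose] using h))
      have := hMinv.dotProduct_mulVec_pos hy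
      simp only [star_trivial] at this ⊢
      calc x ⬝ᵥ A *ᵥ x = x ⬝ᵥ (J *ᵥ (M⁻¹ *ᵥ (Jᵀ *ᵥ x))) := by
            rw [hAdef, ← mulVec_mulVec, ← mulVec_mulVec]
        _ = (x ᵥ* J) ⬝ᵥ (M⁻¹ *ᵥ (Jᵀ *ᵥ x)) := by rw [dotProduct_mulVec]
        _ = (Jᵀ *ᵥ x) ⬝ᵥ (M⁻¹ *ᵥ (Jᵀ *ᵥ x)) := by rw [Matrix.mulVec_transpose]
        _ > 0 := this
  haveI : Invertible M := hM.isUnit.invertible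
  haveI : Invertible A := hA.isUnit.invertible
  have hAΛ : A * A⁻¹ = 1 := mul_inv_of_invertible A
  have hΛA : A⁻¹ * A = 1 := inv_mul_of_invertible A
  have hΛT : (A⁻¹)ᵀ = A⁻¹ := by
    rw [transpose_nonsing_inv]
    congr 1
    exact (by simpa using hA.isHermitian : A.IsSymm).eq
  -- Part 2
  have part2 : (dynConsistentPseudoinverse M J)ᵀ * M * dynConsistentPseudoinverse M J = A⁻¹ := by
    unfold dynConsistentPseudoinverse
    rw [← hAdef]
    calc (M⁻¹ * Jᵀ * A⁻¹)ᵀ * M * (M⁻¹ * Jᵀ * A⁻¹)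
        = (A⁻¹)ᵀ * (J * (M⁻¹ * (M * (M⁻¹ * (Jᵀ * A⁻¹))))) := by
          simp only [transpose_mul, transpose_transpose, hMinvT, Matrix.mul_assoc]
      _ = A⁻¹ * (A * A⁻¹) := by
          rw [Matrix.inv_mul_cancel_left_of_invertible, hΛT, hAdef]
          simp only [Matrix.mul_assoc]
      _ = A⁻¹ := by rw [hAΛ, Matrix.mul_one]
  refine ⟨?_, part2⟩
  -- Part 1
  set P := dynConsistentPseudoinverse M J with hPdef
  have hJν : J *ᵥ ν = 0 := hν
  have hηv : η = J *ᵥ v := by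
    rw [hη, hsum, mulVec_add, hJν, zero_add]
  have hJP : J * P = 1 := by
    rw [hPdef]
    unfold dynConsistentPseudoinverse
    rw [← Matrix.mul_assoc, ← Matrix.mul_assoc, ← hAdef, hAΛ]
  have hMP : M * P = Jᵀ * A⁻¹ := by
    rw [hPdef]
    unfold dynConsistentPseudoinverse
    rw [← hAdef, ← Matrix.mul_assoc, Matrix.mul_inv_cancel_left_of_invertible]
  set u := v - P *ᵥ η with hudef
  have hJu : J *ᵥ u = 0 := by
    rw [hudef, mulVec_sub, mulVec_mulVec, hJP, one_mulVec, hηv, sub_self]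
  have hu_ker : u ∈ LinearMap.ker J.mulVecLin := by
    simpa using hJu
  have h1 : v ⬝ᵥ M *ᵥ u = 0 := hv u hu_ker
  have h2 : (P *ᵥ η) ⬝ᵥ M *ᵥ u = 0 := by
    calc (P *ᵥ η) ⬝ᵥ M *ᵥ u = (M *ᵥ (P *ᵥ η)) ⬝ᵥ u := by
          rw [dotProduct_mulVec, ← Matrix.mulVec_transpose, hMT]
      _ = (Jᵀ *ᵥ (A⁻¹ *ᵥ η)) ⬝ᵥ u := by rw [mulVec_mulVec, hMP, ← mulVec_mulVec]
      _ = (A⁻¹ *ᵥ η) ⬝ᵥ (J *ᵥ u) := by rw [mulVec_transpose, ← dotProduct_mulVec]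
      _ = 0 := by rw [hJu, dotProduct_zero]
  have huMu : u ⬝ᵥ M *ᵥ u = 0 := by
    have : u ⬝ᵥ M *ᵥ u = v ⬝ᵥ M *ᵥ u - (P *ᵥ η) ⬝ᵥ M *ᵥ u := by
      rw [hudef, sub_dotProduct]
    rw [this, h1, h2, sub_zero]
  have hu0 : u = 0 := by
    by_contra h
    have := hM.dotProduct_mulVec_pos h
    simp only [star_trivial] at this
    rw [huMu] at this
    exact lt_irrefl 0 this
  have hvP : v = P *ᵥ η := by
    have := sub_eq_zero.mp hu0
    exact this
  -- final computation
  have key : v ⬝ᵥ M *ᵥ v = η ⬝ᵥ A⁻¹ *ᵥ η := by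
    rw [hvP]
    calc (P *ᵥ η) ⬝ᵥ M *ᵥ (P *ᵥ η)
        = η ⬝ᵥ (Pᵀ *ᵥ (M *ᵥ (P *ᵥ η))) := by
          rw [dotProduct_mulVec η Pᵀ, vecMul_transpose]
      _ = η ⬝ᵥ ((Pᵀ * M * P) *ᵥ η) := by rw [mulVec_mulVec, mulVec_mulVec, Matrix.mul_assoc]
      _ = η ⬝ᵥ A⁻¹ *ᵥ η := by rw [part2]
  rw [key]
end

section
/- The extended Jacobian J̄ = [J; N] (the n×n matrix obtained by stacking J over N, where N = (Z M Zᵀ)⁻¹ Z M) is invertible, and its inverse is the n×n matrix [J_M^# Zᵀ] obtained by placing J_M^# and Zᵀ side by side. In particular J J_M^# = I_m, J Zᵀ = 0, N J_M^# = 0, N Zᵀ = I_{n−m}, and J_M^# J + Zᵀ N = I_n. -/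
open Matrix

lemma aux_inj {k n : ℕ} (B : Matrix (Fin k) (Fin n) ℝ) (hB : B.rank = k) :
    ∀ x : Fin k → ℝ, x ≠ 0 → Bᵀ *ᵥ x ≠ 0 := by
  have hrk : Bᵀ.rank = k := by rw [B.rank_transpose, hB]
  have hker : LinearMap.ker Bᵀ.mulVecLin = ⊥ := by
    have h := Bᵀ.mulVecLin.finrank_range_add_finrank_ker
    rw [show Module.finrank ℝ (LinearMap.range Bᵀ.mulVecLin) = k from hrk] at h
    simp only [Module.finrank_pi, Fintype.card_fin] at h
    have : Module.finrank ℝ (LinearMap.ker Bᵀ.mulVecLin) = 0 := by omega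
    exact Submodule.finrank_eq_zero.mp this
  intro x hx hx0
  have : x ∈ LinearMap.ker Bᵀ.mulVecLin :=
    LinearMap.mem_ker.mpr (show Bᵀ.mulVecLin x = 0 by
      simpa [Matrix.mulVec_transpose] using hx0)
  rw [hker] at this
  exact hx (by simpa using this)

lemma aux_posdef {k n : ℕ} (B : Matrix (Fin k) (Fin n) ℝ)
    (M : Matrix (Fin n) (Fin n) ℝ) (hM : M.PosDef) (hB : B.rank = k) :
    (B * M * Bᵀ).PosDef := by
  refine posDef_iff_dotProduct_mulVec.mpr ⟨?_, ?_⟩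
  · show (B * M * Bᵀ)ᴴ = _
    have hMt : Mᵀ = M := by
      simpa [conjTranspose_eq_transpose_of_trivial] using hM.isHermitian.eq
    simp [conjTranspose_eq_transpose_of_trivial, transpose_mul, Matrix.mul_assoc, hMt]
  · intro x hx
    have hy : Bᵀ *ᵥ x ≠ 0 := aux_inj B hB x hx
    have := hM.dotProduct_mulVec_pos hy
    simp only [star_trivial] at this ⊢
    rw [show (B * M * Bᵀ) *ᵥ x = B *ᵥ (M *ᵥ (Bᵀ *ᵥ x)) by
      simp [Matrix.mulVec_mulVec, Matrix.mul_assoc],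
      dotProduct_mulVec, show x ᵥ* B = Bᵀ *ᵥ x from (Matrix.mulVec_transpose B x).symm]
    exact this

/-- With `N = (Z M Zᵀ)⁻¹ Z M`, the extended Jacobian
`J̄ = [J; N]` is invertible with inverse `[J_M^#  Zᵀ]`; in particular
`J J_M^# = I`, `J Zᵀ = 0`, `N J_M^# = 0`, `N Zᵀ = I`, and
`J_M^# J + Zᵀ N = I`. -/
theorem extended_jacobian_inverse
    {n m : ℕ} (hmn : m ≤ n)
    (M : Matrix (Fin n) (Fin n) ℝ) (J : Matrix (Fin m) (Fin n) ℝ)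
    (Z : Matrix (Fin (n - m)) (Fin n) ℝ)
    (hM : M.PosDef) (hJ : J.rank = m)
    (hZ : Z.rank = n - m) (hJZ : J * Zᵀ = 0) :
    (fromRows J ((Z * M * Zᵀ)⁻¹ * Z * M)) *
        (fromCols (dynConsistentPseudoinverse M J) Zᵀ) =
        (1 : Matrix (Fin m ⊕ Fin (n - m)) (Fin m ⊕ Fin (n - m)) ℝ) ∧
    (fromCols (dynConsistentPseudoinverse M J) Zᵀ) *
        (fromRows J ((Z * M * Zᵀ)⁻¹ * Z * M)) =
        (1 : Matrix (Fin n) (Fin n) ℝ) ∧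
    J * dynConsistentPseudoinverse M J = (1 : Matrix (Fin m) (Fin m) ℝ) ∧
    J * Zᵀ = 0 ∧
    ((Z * M * Zᵀ)⁻¹ * Z * M) * dynConsistentPseudoinverse M J = 0 ∧
    ((Z * M * Zᵀ)⁻¹ * Z * M) * Zᵀ =
        (1 : Matrix (Fin (n - m)) (Fin (n - m)) ℝ) ∧
    dynConsistentPseudoinverse M J * J + Zᵀ * ((Z * M * Zᵀ)⁻¹ * Z * M) =
        (1 : Matrix (Fin n) (Fin n) ℝ) := by
  set Jp := dynConsistentPseudoinverse M J with hJp
  set N := (Z * M * Zᵀ)⁻¹ * Z * M with hN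
  have hJMJ : (J * M⁻¹ * Jᵀ).PosDef := by
    simpa [Matrix.mul_assoc] using aux_posdef J M⁻¹ hM.inv hJ
  have hZMZ : (Z * M * Zᵀ).PosDef := aux_posdef Z M hM hZ
  have h1 : J * Jp = 1 := by
    rw [hJp, dynConsistentPseudoinverse, ← Matrix.mul_assoc, ← Matrix.mul_assoc,
      Matrix.mul_nonsing_inv _ (isUnit_iff_ne_zero.mpr hJMJ.det_pos.ne')]
  have hZJ : Z * Jᵀ = 0 := by
    have := congrArg Matrix.transpose hJZ
    simpa [transpose_mul] using this
  have h3 : N * Jp = 0 := by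
    rw [hN, hJp, dynConsistentPseudoinverse]
    have : Z * M * M⁻¹ = Z := by
      rw [Matrix.mul_assoc, Matrix.mul_nonsing_inv _ (isUnit_iff_ne_zero.mpr hM.det_pos.ne'),
        Matrix.mul_one]
    calc (Z * M * Zᵀ)⁻¹ * Z * M * (M⁻¹ * Jᵀ * (J * M⁻¹ * Jᵀ)⁻¹)
        = (Z * M * Zᵀ)⁻¹ * ((Z * M * M⁻¹) * Jᵀ) * (J * M⁻¹ * Jᵀ)⁻¹ := by
          simp only [Matrix.mul_assoc]
      _ = 0 := by rw [this, hZJ]; simp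
  have h4 : N * Zᵀ = 1 := by
    have heq : N * Zᵀ = (Z * M * Zᵀ)⁻¹ * (Z * M * Zᵀ) := by
      rw [hN]; simp only [Matrix.mul_assoc]
    rw [heq, Matrix.nonsing_inv_mul _ (isUnit_iff_ne_zero.mpr hZMZ.det_pos.ne')]
  have hfwd : fromRows J N * fromCols Jp Zᵀ = 1 := by
    rw [fromRows_mul_fromCols, h1, hJZ, h3, h4, fromBlocks_one]
  have e : Fin n ≃ Fin m ⊕ Fin (n - m) :=
    (finCongr (Nat.add_sub_cancel' hmn).symm).trans finSumFinEquiv.symm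
  have hbwd : fromCols Jp Zᵀ * fromRows J N = 1 :=
    (fromCols_mul_fromRows_eq_one_comm e Jp Zᵀ J N).mpr hfwd
  have hsum : Jp * J + Zᵀ * N = 1 := by
    rw [← fromCols_mul_fromRows, hbwd]
  exact ⟨hfwd, hbwd, h1, hJZ, h3, h4, hsum⟩
end

section
/- The total mechanical power splits across the task and null-space ports: for any τ, q̇ ∈ ℝⁿ, setting σ = (J_M^#)ᵀ τ, τ₀ = Z τ, η = J q̇, and ν = N q̇ (with N = (Z M Zᵀ)⁻¹ Z M), one has σᵀ η + τ₀ᵀ ν = τᵀ q̇. -/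
open Matrix

lemma aux_inj_of_rank {k l : ℕ} (A : Matrix (Fin k) (Fin l) ℝ) (h : A.rank = l) :
    Function.Injective A.mulVecLin := by
  rw [← LinearMap.ker_eq_bot]
  have h1 := LinearMap.finrank_range_add_finrank_ker A.mulVecLin
  rw [Matrix.rank] at h
  rw [h] at h1
  simp only [Module.finrank_fintype_fun_eq_card, Fintype.card_fin] at h1
  have : Module.finrank ℝ (LinearMap.ker A.mulVecLin) = 0 := by omega
  exact Submodule.finrank_eq_zero.mp this

lemma aux_posDef_sandwich {k n : ℕ} {M : Matrix (Fin n) (Fin n) ℝ} (hM : M.PosDef)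
    (B : Matrix (Fin k) (Fin n) ℝ) (hB : Function.Injective Bᵀ.mulVecLin) :
    (B * M * Bᵀ).PosDef := by
  refine Matrix.PosDef.of_dotProduct_mulVec_pos ?_ ?_
  · have := (hM.posSemidef.mul_mul_conjTranspose_same B).1
    simpa using this
  · intro x hx
    have hxz : Bᵀ *ᵥ x ≠ 0 := by
      intro h0
      apply hx
      apply hB
      show Bᵀ *ᵥ x = Bᵀ *ᵥ 0
      simpa using h0
    have := hM.dotProduct_mulVec_pos hxz
    simpa [Matrix.dotProduct_mulVec, Matrix.mul_assoc, ← Matrix.mulVec_mulVec,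
      Matrix.vecMul_transpose, ← Matrix.mulVec_transpose] using this

/-- The total mechanical power splits across the task and
null-space ports: with `σ = (J_M^#)ᵀ τ`, `τ₀ = Z τ`, `η = J q̇` and
`ν = N q̇` (where `N = (Z M Zᵀ)⁻¹ Z M`), one has `σᵀ η + τ₀ᵀ ν = τᵀ q̇`. -/
theorem power_port_split
    {n m : ℕ} (hmn : m ≤ n)
    (M : Matrix (Fin n) (Fin n) ℝ) (J : Matrix (Fin m) (Fin n) ℝ)
    (Z : Matrix (Fin (n - m)) (Fin n) ℝ)
    (hM : M.PosDef) (hJ : J.rank = m)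
    (hZ : Z.rank = n - m) (hJZ : J * Zᵀ = 0)
    (τ qdot : Fin n → ℝ)
    (σ : Fin m → ℝ) (τ₀ : Fin (n - m) → ℝ)
    (η : Fin m → ℝ) (ν : Fin (n - m) → ℝ)
    (hσ : σ = (dynConsistentPseudoinverse M J)ᵀ.mulVec τ)
    (hτ₀ : τ₀ = Z.mulVec τ)
    (hη : η = J.mulVec qdot)
    (hν : ν = ((Z * M * Zᵀ)⁻¹ * Z * M).mulVec qdot) :
    σ ⬝ᵥ η + τ₀ ⬝ᵥ ν = τ ⬝ᵥ qdot := by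
  -- invertible core matrices
  have hJt : Jᵀ.rank = m := by rw [Matrix.rank_transpose]; exact hJ
  have hZt : Zᵀ.rank = n - m := by rw [Matrix.rank_transpose]; exact hZ
  have hG : (J * M⁻¹ * Jᵀ).PosDef := aux_posDef_sandwich hM.inv J (aux_inj_of_rank Jᵀ hJt)
  have hW : (Z * M * Zᵀ).PosDef := aux_posDef_sandwich hM Z (aux_inj_of_rank Zᵀ hZt)
  set G := J * M⁻¹ * Jᵀ with hGdef
  set W := Z * M * Zᵀ with hWdef
  have hGdet : IsUnit G.det := hG.det_pos.ne'.isUnit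
  have hWdet : IsUnit W.det := hW.det_pos.ne'.isUnit
  have hMdet : IsUnit M.det := hM.det_pos.ne'.isUnit
  set B := M⁻¹ * Jᵀ * G⁻¹ with hBdef
  set N := W⁻¹ * Z * M with hNdef
  set P := B * J with hPdef
  set Q := Zᵀ * N with hQdef
  -- J * (P + Q) = J
  have hJP : J * P = J := by
    rw [hPdef, hBdef, ← Matrix.mul_assoc, ← Matrix.mul_assoc, ← Matrix.mul_assoc,
      ← hGdef, Matrix.mul_nonsing_inv _ hGdet, Matrix.one_mul]
  have hJQ : J * Q = 0 := by
    rw [hQdef, ← Matrix.mul_assoc, hJZ, Matrix.zero_mul]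
  -- Z * M * (P + Q) = Z * M
  have hZJt : Z * Jᵀ = 0 := by
    have := congrArg Matrix.transpose hJZ
    simpa [Matrix.transpose_mul] using this
  have hZMP : Z * M * P = 0 := by
    rw [hPdef, hBdef, ← Matrix.mul_assoc, ← Matrix.mul_assoc, ← Matrix.mul_assoc,
      Matrix.mul_assoc (Z * M) M⁻¹ Jᵀ]
    rw [Matrix.mul_assoc Z M (M⁻¹ * Jᵀ), ← Matrix.mul_assoc M M⁻¹ Jᵀ,
      Matrix.mul_nonsing_inv _ hMdet, Matrix.one_mul, hZJt, Matrix.zero_mul, Matrix.zero_mul]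
  have hZMQ : Z * M * Q = Z * M := by
    rw [hQdef, hNdef, ← Matrix.mul_assoc, ← Matrix.mul_assoc, ← Matrix.mul_assoc,
      ← hWdef, Matrix.mul_nonsing_inv _ hWdet, Matrix.one_mul]
  -- kernel of J = range of Zᵀ
  have hker : LinearMap.range Zᵀ.mulVecLin = LinearMap.ker J.mulVecLin := by
    apply Submodule.eq_of_le_of_finrank_eq
    · rintro x ⟨y, rfl⟩
      simp only [LinearMap.mem_ker, Matrix.mulVecLin_apply, Matrix.mulVec_mulVec, hJZ,
        Matrix.zero_mulVec]
    · have h1 := LinearMap.finrank_range_add_finrank_ker J.mulVecLin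
      have h2 : Module.finrank ℝ (LinearMap.range J.mulVecLin) = m := hJ
      have h3 : Module.finrank ℝ (LinearMap.range Zᵀ.mulVecLin) = n - m := hZt
      simp only [Module.finrank_fintype_fun_eq_card, Fintype.card_fin] at h1
      omega
  -- (P + Q) *ᵥ qdot = qdot
  have hkey : (P + Q) *ᵥ qdot = qdot := by
    set u := (P + Q) *ᵥ qdot - qdot with hudef
    have hJu : J *ᵥ u = 0 := by
      rw [hudef, Matrix.mulVec_sub, Matrix.mulVec_mulVec, Matrix.mul_add, hJP, hJQ,
        add_zero, sub_self]
    have hZMu : (Z * M) *ᵥ u = 0 := by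
      rw [hudef, Matrix.mulVec_sub, Matrix.mulVec_mulVec, Matrix.mul_add, hZMP, hZMQ,
        zero_add, sub_self]
    have hu_mem : u ∈ LinearMap.range Zᵀ.mulVecLin := by
      rw [hker]; exact hJu
    obtain ⟨y, hy⟩ := hu_mem
    have hy' : Zᵀ *ᵥ y = u := hy
    have hWy : W *ᵥ y = 0 := by
      rw [hWdef, ← Matrix.mulVec_mulVec, ← Matrix.mulVec_mulVec, hy']
      have : M *ᵥ (Zᵀ *ᵥ y) = M *ᵥ u := by rw [hy']
      rw [← hy']
      calc Z *ᵥ (M *ᵥ (Zᵀ *ᵥ y)) = (Z * M) *ᵥ (Zᵀ *ᵥ y) := by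
            rw [← Matrix.mulVec_mulVec]
        _ = (Z * M) *ᵥ u := by rw [hy']
        _ = 0 := hZMu
    have hy0 : y = 0 := by
      have := congrArg (fun v => W⁻¹ *ᵥ v) hWy
      simpa [Matrix.mulVec_mulVec, Matrix.nonsing_inv_mul _ hWdet] using this
    have hu0 : u = 0 := by rw [← hy', hy0, Matrix.mulVec_zero]
    have := sub_eq_zero.mp hu0
    exact this
  -- final computation
  have hB' : dynConsistentPseudoinverse M J = B := rfl
  rw [hσ, hτ₀, hη, hν, hB']
  have e1 : (Bᵀ *ᵥ τ) ⬝ᵥ (J *ᵥ qdot) = τ ⬝ᵥ (P *ᵥ qdot) := by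
    rw [Matrix.mulVec_transpose, ← Matrix.dotProduct_mulVec, Matrix.mulVec_mulVec, hPdef]
  have e2 : (Z *ᵥ τ) ⬝ᵥ (N *ᵥ qdot) = τ ⬝ᵥ (Q *ᵥ qdot) := by
    have : Z *ᵥ τ = τ ᵥ* Zᵀ := by rw [← Matrix.mulVec_transpose, Matrix.transpose_transpose]
    rw [this, ← Matrix.dotProduct_mulVec, Matrix.mulVec_mulVec, hQdef]
  rw [e1, e2, ← dotProduct_add, ← Matrix.add_mulVec, hkey]
end
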